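/- Let G, H be proper geodesic metric spaces and p : ∂_*G → ∂_*H a homeomorphism of Morse boundaries (with direct limit topology). Then there exists a map h between Morse gauges such that for every Morse gauge M, p(∂^M_*G) ⊂ ∂^{h(M)}_*H and p^{-1}(∂^M_*H) ⊂ ∂^{h(M)}_*G. -/

import Mathlib

open Set

/-- A Morse gauge. -/
abbrev MorseGauge := ℝ → ℝ → ℝ

variable {X : Type*} [MetricSpace X]

/-- `γ` is a `(L, e)`-quasi-geodesic on the parameter set `s`. -/
def IsQGOn (L e : ℝ) (γ : ℝ → X) (s : Set ℝ) : Prop :=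
  ∀ t ∈ s, ∀ u ∈ s,
    (1 / L) * |t - u| - e ≤ dist (γ t) (γ u) ∧ dist (γ t) (γ u) ≤ L * |t - u| + e

/-- `γ` is a geodesic (unit-speed) on the parameter set `s`. -/
def IsGeodesicOn (γ : ℝ → X) (s : Set ℝ) : Prop :=
  ∀ t ∈ s, ∀ u ∈ s, dist (γ t) (γ u) = |t - u|

/-- `X` is a geodesic metric space. -/
def GeodesicSpace (X : Type*) [MetricSpace X] : Prop :=
  ∀ x y : X, ∃ γ : ℝ → X, γ 0 = x ∧ γ (dist x y) = y ∧ IsGeodesicOn γ (Icc 0 (dist x y))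

/-- The path `γ` (defined on the parameter set `s`) is `M`-Morse: every `(L,e)`-quasi-geodesic
(`L ≥ 1`, `e ≥ 0`) with endpoints on `γ` stays in the closed `M L e`-neighbourhood of `γ`. -/
def IsMorseOn (M : MorseGauge) (γ : ℝ → X) (s : Set ℝ) : Prop :=
  ∀ L e, 1 ≤ L → 0 ≤ e → ∀ (η : ℝ → X) (a b : ℝ), a ≤ b →
    IsQGOn L e η (Icc a b) → η a ∈ γ '' s → η b ∈ γ '' s →
    ∀ t ∈ Icc a b, ∃ u ∈ s, dist (η t) (γ u) ≤ M L e

/-- The constant `δ_M` associated to a Morse gauge `M`. -/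
noncomputable def deltaM (M : MorseGauge) : ℝ :=
  max (4 * M 1 (2 * M 5 0) + 2 * M 5 0) (8 * M 3 0)

/-- A geodesic ray from the basepoint `e`. -/
def IsRayFrom (e : X) (γ : ℝ → X) : Prop :=
  γ 0 = e ∧ IsGeodesicOn γ (Ici 0)

/-- A Morse geodesic ray from `e`. -/
def IsMorseRayR (e : X) (γ : ℝ → X) : Prop :=
  IsRayFrom e γ ∧ ∃ M, IsMorseOn M γ (Ici 0)

/-- The type of Morse geodesic rays from `e`. -/
def MRayR (X : Type*) [MetricSpace X] (e : X) := {γ : ℝ → X // IsMorseRayR e γ}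

/-- The Morse boundary: Morse rays from `e` up to bounded distance. -/
def MorseBoundaryR (X : Type*) [MetricSpace X] (e : X) :=
  Quot (fun γ γ' : MRayR X e => ∃ C, ∀ t ≥ (0 : ℝ), dist (γ.1 t) (γ'.1 t) ≤ C)

/-- `z` admits an `M`-Morse realization. -/
def MorseDirR {X : Type*} [MetricSpace X] (e : X) (M : MorseGauge)
    (z : MorseBoundaryR X e) : Prop :=
  ∃ γ : MRayR X e, IsMorseOn M γ.1 (Ici 0) ∧ Quot.mk _ γ = z

/-- The `M`-Morse stratum `∂^M_* X` of the Morse boundary. -/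
def stratumR (X : Type*) [MetricSpace X] (e : X) (M : MorseGauge) :
    Set (MorseBoundaryR X e) :=
  {z | MorseDirR e M z}

/-- The neighbourhood `U_{M,n}(z)` inside the `M`-stratum. -/
def UR {X : Type*} [MetricSpace X] (e : X) (M : MorseGauge) (n : ℝ)
    (z : MorseBoundaryR X e) : Set (MorseBoundaryR X e) :=
  {w | ∃ η : MRayR X e, Quot.mk _ η = w ∧ IsMorseOn M η.1 (Ici 0) ∧
        ∀ ξ : MRayR X e, IsMorseOn M ξ.1 (Ici 0) → Quot.mk _ ξ = z →
          ∀ t ∈ Icc 0 n, dist (η.1 t) (ξ.1 t) < deltaM M}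

/-- The direct-limit topology on the Morse boundary. -/
def morseTopologyR (X : Type*) [MetricSpace X] (e : X) :
    TopologicalSpace (MorseBoundaryR X e) where
  IsOpen O := ∀ M z, z ∈ O → MorseDirR e M z →
    ∃ n : ℝ, UR e M n z ∩ stratumR X e M ⊆ O
  isOpen_univ := by intro M z _ _; exact ⟨0, fun w _ => trivial⟩
  isOpen_inter := by
    intro O₁ O₂ h₁ h₂ M z hz hM
    obtain ⟨n₁, hn₁⟩ := h₁ M z hz.1 hM
    obtain ⟨n₂, hn₂⟩ := h₂ M z hz.2 hM
    refine ⟨max n₁ n₂, fun w hw => ⟨hn₁ ⟨?_, hw.2⟩, hn₂ ⟨?_, hw.2⟩⟩⟩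
    · obtain ⟨η, h1, h2, h3⟩ := hw.1
      refine ⟨η, h1, h2, fun ξ a b t ht => h3 ξ a b t ⟨ht.1, ht.2.trans (le_max_left _ _)⟩⟩
    · obtain ⟨η, h1, h2, h3⟩ := hw.1
      refine ⟨η, h1, h2, fun ξ a b t ht => h3 ξ a b t ⟨ht.1, ht.2.trans (le_max_right _ _)⟩⟩
  isOpen_sUnion := by
    intro S hS M z hz hM
    obtain ⟨O, hO, hzO⟩ := hz
    obtain ⟨n, hn⟩ := hS O hO M z hzO hM
    exact ⟨n, fun w hw => ⟨O, hO, hn hw⟩⟩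
section Basics

variable {Z : Type*} [MetricSpace Z] {o : Z}

lemma IsQGOn.mono {L e L' e' : ℝ} {γ : ℝ → Z} {s : Set ℝ} (h : IsQGOn L e γ s)
    (hL1 : 1 ≤ L) (hL : L ≤ L') (he : e ≤ e') : IsQGOn L' e' γ s := by
  intro t ht u hu
  obtain ⟨h1, h2⟩ := h t ht u hu
  have hLpos : (0:ℝ) < L := lt_of_lt_of_le one_pos hL1
  have habs : (0:ℝ) ≤ |t - u| := abs_nonneg _
  constructor
  · have : (1/L') * |t - u| ≤ (1/L) * |t - u| := by
      apply mul_le_mul_of_nonneg_right _ habs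
      exact one_div_le_one_div_of_le hLpos hL
    linarith
  · have : L * |t - u| ≤ L' * |t - u| := mul_le_mul_of_nonneg_right hL habs
    linarith

lemma IsMorseOn.mono_gauge {M M' : MorseGauge} {γ : ℝ → Z} {s : Set ℝ}
    (h : IsMorseOn M γ s) (hMM : ∀ L e, 1 ≤ L → 0 ≤ e → M L e ≤ M' L e) :
    IsMorseOn M' γ s := by
  intro L e hL he η a b hab hqg ha hb t ht
  obtain ⟨u, hu, hd⟩ := h L e hL he η a b hab hqg ha hb t ht
  exact ⟨u, hu, hd.trans (hMM L e hL he)⟩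

lemma ray_dist_o {γ : ℝ → Z} (hγ : IsRayFrom o γ) {v : ℝ} (hv : 0 ≤ v) :
    dist o (γ v) = v := by
  have := hγ.2 0 (mem_Ici.2 (le_refl 0)) v (mem_Ici.2 hv)
  rw [hγ.1] at this
  rw [this, abs_of_nonpos (by linarith : (0:ℝ) - v ≤ 0)]
  ring

lemma ray_lipschitzOn {γ : ℝ → Z} (hγ : IsGeodesicOn γ (Ici 0)) :
    LipschitzOnWith 1 γ (Ici 0) := by
  rw [lipschitzOnWith_iff_dist_le_mul]
  intro x hx y hy
  rw [hγ x hx y hy, Real.dist_eq]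
  simp

/-- A Morse ray forces its gauge to be nonnegative on the relevant region. -/
lemma mgauge_nonneg {γ : ℝ → Z} {M : MorseGauge} (hγ : IsRayFrom o γ)
    (hM : IsMorseOn M γ (Ici 0)) {L e : ℝ} (hL : 1 ≤ L) (he : 0 ≤ e) :
    0 ≤ M L e := by
  have hqg : IsQGOn L e (fun _ => o) (Icc 0 0) := by
    intro t ht u hu
    rw [mem_Icc] at ht hu
    have ht0 : t = 0 := le_antisymm ht.2 ht.1
    have hu0 : u = 0 := le_antisymm hu.2 hu.1
    subst ht0; subst hu0
    simp only [dist_self, sub_self, abs_zero, mul_zero, zero_sub]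
    constructor <;> nlinarith
  have hmem : (fun _ => o) (0:ℝ) ∈ γ '' Ici 0 := ⟨0, mem_Ici.2 (le_refl 0), hγ.1⟩
  obtain ⟨u, hu, hd⟩ := hM L e hL he (fun _ => o) 0 0 (le_refl 0) hqg hmem hmem 0
    (by simp)
  rw [mem_Ici] at hu
  have hdo : dist o (γ u) = u := ray_dist_o hγ hu
  rw [hdo] at hd
  exact le_trans hu hd

/-- The boundary relation. -/
abbrev brel (o : Z) : MRayR Z o → MRayR Z o → Prop :=
  fun γ γ' => ∃ C, ∀ t ≥ (0:ℝ), dist (γ.1 t) (γ'.1 t) ≤ C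

lemma brel_equiv : Equivalence (brel o) := by
  constructor
  · intro γ; exact ⟨0, fun t _ => by simp⟩
  · rintro γ γ' ⟨C, hC⟩; exact ⟨C, fun t ht => by rw [dist_comm]; exact hC t ht⟩
  · rintro γ γ' γ'' ⟨C, hC⟩ ⟨C', hC'⟩
    exact ⟨C + C', fun t ht => (dist_triangle _ (γ'.1 t) _).trans
      (add_le_add (hC t ht) (hC' t ht))⟩

lemma class_eq_iff {γ γ' : MRayR Z o} :
    (Quot.mk (brel o) γ : MorseBoundaryR Z o) = Quot.mk (brel o) γ' ↔ brel o γ γ' := by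
  rw [Quot.eq]
  exact Equivalence.eqvGen_iff brel_equiv

end Basics
section AsymG1

variable {Z : Type*} [MetricSpace Z] {o : Z}

/-- Core geometric lemma: a geodesic ray from `o` that is asymptotic to an `M`-Morse
geodesic ray from `o` stays within `2 * M 3 0` of it (at equal times). -/
theorem asymG1 [ProperSpace Z] (hZ : GeodesicSpace Z) {γ γ' : ℝ → Z} {M : MorseGauge}
    (hγ : IsRayFrom o γ) (hγ' : IsRayFrom o γ') (hM : IsMorseOn M γ' (Ici 0))
    {C : ℝ} (hC : ∀ t ≥ (0:ℝ), dist (γ t) (γ' t) ≤ C) :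
    ∀ u ≥ (0:ℝ), dist (γ u) (γ' u) ≤ 2 * M 3 0 := by
  intro u hu
  have hC0 : 0 ≤ C := le_trans dist_nonneg (hC 0 (le_refl 0))
  set t : ℝ := u + C + 1 with ht_def
  have ht0 : 0 ≤ t := by positivity
  have hdt : dist o (γ' t) = t := ray_dist_o hγ' ht0
  set f : ℝ → ℝ := fun w => dist (γ' t) (γ w) with hf_def
  have hconf : ContinuousOn f (Icc 0 (t + C)) := by
    apply Continuous.comp_continuousOn (continuous_dist.comp
      (Continuous.prodMk continuous_const continuous_id))
    exact ((ray_lipschitzOn hγ.2).continuousOn).mono Icc_subset_Ici_self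
  obtain ⟨p, hpmem, hpmin⟩ := (isCompact_Icc (a := (0:ℝ)) (b := t + C)).exists_isMinOn
    (nonempty_Icc.2 (by linarith)) hconf
  have hp0 : (0:ℝ) ≤ p := hpmem.1
  have hft : f t ≤ C := by
    show dist (γ' t) (γ t) ≤ C
    rw [dist_comm]; exact hC t ht0
  have hfp : f p ≤ C := le_trans (hpmin ⟨ht0, by linarith⟩) hft
  have hglob : ∀ w ≥ (0:ℝ), f p ≤ f w := by
    intro w hw
    by_cases hwle : w ≤ t + C
    · exact hpmin ⟨hw, hwle⟩
    · push_neg at hwle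
      have h1 : dist o (γ w) = w := ray_dist_o hγ hw
      have htri := dist_triangle o (γ' t) (γ w)
      rw [h1, hdt] at htri
      have : w - t ≤ f w := by simpa using by linarith
      linarith
  set r : ℝ := dist (γ p) (γ' t) with hr_def
  have hr0 : 0 ≤ r := dist_nonneg
  have hfpr : f p = r := dist_comm (γ' t) (γ p)
  have hrC : r ≤ C := by rw [← hfpr]; exact hfp
  -- p is large
  have hdp : dist o (γ p) = p := ray_dist_o hγ hp0
  have hpt : t - r ≤ p := by
    have habs := abs_dist_sub_le (γ p) (γ' t) o
    rw [dist_comm (γ p) o, dist_comm (γ' t) o, hdp, hdt] at habs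
    have := abs_le.1 habs
    linarith [this.1]
  have hpu : u + 1 ≤ p := by linarith
  -- geodesic from γ p to γ' t
  obtain ⟨σ, hσ0, hσr, hσgeo⟩ := hZ (γ p) (γ' t)
  rw [← hr_def] at hσr hσgeo
  set η : ℝ → Z := fun v => if v ≤ p then γ v else σ (v - p) with hη_def
  -- key distance estimates
  have key : ∀ v ∈ Icc (0:ℝ) (p + r), ∀ w ∈ Icc (0:ℝ) (p + r), v ≤ w →
      (1/3) * (w - v) ≤ dist (η v) (η w) ∧ dist (η v) (η w) ≤ w - v := by
    intro v hv w hw hvw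
    by_cases hwp : w ≤ p
    · have hvp : v ≤ p := le_trans hvw hwp
      have : dist (η v) (η w) = w - v := by
        simp only [hη_def, if_pos hvp, if_pos hwp]
        rw [hγ.2 v hv.1 w hw.1, abs_of_nonpos (by linarith : v - w ≤ 0)]
        ring
      rw [this]; constructor <;> linarith
    · push_neg at hwp
      have hwmem : w - p ∈ Icc (0:ℝ) r := ⟨by linarith, by linarith [hw.2]⟩
      by_cases hvp : v ≤ p
      · -- mixed case
        have hηv : η v = γ v := if_pos hvp
        have hηw : η w = σ (w - p) := if_neg (by linarith)
        set s : ℝ := w - p with hs_def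
        have hs0 : 0 ≤ s := hwmem.1
        have hsr : s ≤ r := hwmem.2
        have h0r : (0:ℝ) ∈ Icc (0:ℝ) r := ⟨le_refl 0, hr0⟩
        have hrr : r ∈ Icc (0:ℝ) r := ⟨hr0, le_refl r⟩
        have hd1 : dist (γ p) (σ s) = s := by
          rw [← hσ0, hσgeo 0 h0r s hwmem, abs_of_nonpos (by linarith : (0:ℝ) - s ≤ 0)]
          ring
        have hd2 : dist (σ s) (γ' t) = r - s := by
          rw [← hσr, hσgeo s hwmem r hrr, abs_of_nonpos (by linarith : s - r ≤ 0)]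
          ring
        have hdvp : dist (γ v) (γ p) = p - v := by
          rw [hγ.2 v hv.1 p (mem_Ici.2 hp0), abs_of_nonpos (by linarith : v - p ≤ 0)]
          ring
        -- upper bound
        have hup : dist (γ v) (σ s) ≤ w - v := by
          calc dist (γ v) (σ s) ≤ dist (γ v) (γ p) + dist (γ p) (σ s) := dist_triangle _ _ _
            _ = (p - v) + s := by rw [hdvp, hd1]
            _ = w - v := by rw [hs_def]; ring
        -- lower bound (i) : s ≤ d
        have hlow1 : s ≤ dist (γ v) (σ s) := by
          have h : r ≤ dist (γ' t) (γ v) := by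
            rw [← hfpr]; exact hglob v hv.1
          have htri : dist (γ' t) (γ v) ≤ dist (γ' t) (σ s) + dist (σ s) (γ v) :=
            dist_triangle _ _ _
          have e1 : dist (γ' t) (σ s) = r - s := by rw [dist_comm]; exact hd2
          have e2 : dist (σ s) (γ v) = dist (γ v) (σ s) := dist_comm _ _
          rw [e1, e2] at htri
          linarith
        -- lower bound (ii) : (p - v) - s ≤ d
        have hlow2 : (p - v) - s ≤ dist (γ v) (σ s) := by
          have htri : dist (γ v) (γ p) ≤ dist (γ v) (σ s) + dist (σ s) (γ p) :=
            dist_triangle _ _ _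
          rw [dist_comm (σ s) (γ p)] at htri
          rw [hdvp, hd1] at htri
          linarith
        have hlow : (1/3) * (w - v) ≤ dist (γ v) (σ s) := by
          by_cases hcase : 3 * s ≥ w - v
          · linarith
          · push_neg at hcase
            have : p - v = (w - v) - s := by rw [hs_def]; ring
            linarith
        rw [hηv, hηw]
        exact ⟨hlow, hup⟩
      · -- both beyond p
        push_neg at hvp
        have hvmem : v - p ∈ Icc (0:ℝ) r := ⟨by linarith, by linarith [hv.2]⟩
        have : dist (η v) (η w) = w - v := by
          simp only [hη_def, if_neg (by linarith : ¬ v ≤ p), if_neg (by linarith : ¬ w ≤ p)]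
          rw [hσgeo (v - p) hvmem (w - p) hwmem,
            abs_of_nonpos (by linarith : (v - p) - (w - p) ≤ 0)]
          ring
        rw [this]; constructor <;> linarith
  have hQG : IsQGOn 3 0 η (Icc 0 (p + r)) := by
    intro v hv w hw
    rcases le_total v w with hvw | hvw
    · obtain ⟨h1, h2⟩ := key v hv w hw hvw
      rw [abs_of_nonpos (by linarith : v - w ≤ 0)]
      constructor <;> nlinarith
    · obtain ⟨h1, h2⟩ := key w hw v hv hvw
      rw [dist_comm (η v) (η w)] at *
      rw [abs_of_nonneg (by linarith : 0 ≤ v - w)]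
      constructor <;> nlinarith
  have hend0 : η 0 ∈ γ' '' Ici 0 := by
    refine ⟨0, mem_Ici.2 (le_refl 0), ?_⟩
    rw [hη_def]
    simp only [if_pos hp0]
    rw [hγ'.1]
    exact hγ.1.symm
  have hendb : η (p + r) ∈ γ' '' Ici 0 := by
    by_cases hrz : r = 0
    · refine ⟨t, mem_Ici.2 ht0, ?_⟩
      have : γ p = γ' t := by
        have : dist (γ p) (γ' t) = 0 := by rw [← hr_def, hrz]
        exact dist_eq_zero.1 this
      rw [hη_def]
      simp only [hrz, add_zero, if_pos (le_refl p)]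
      exact this.symm
    · refine ⟨t, mem_Ici.2 ht0, ?_⟩
      have hrpos : 0 < r := lt_of_le_of_ne hr0 (Ne.symm hrz)
      rw [hη_def]
      simp only [if_neg (by linarith : ¬ p + r ≤ p)]
      rw [(by ring : p + r - p = r)]
      exact hσr.symm
  obtain ⟨w, hw0, hwd⟩ := hM 3 0 (by norm_num) (le_refl 0) η 0 (p + r)
    (by linarith) hQG hend0 hendb u ⟨hu, by linarith⟩
  rw [mem_Ici] at hw0
  have hηu : η u = γ u := if_pos (by linarith : u ≤ p)
  rw [hηu] at hwd
  have hdw : dist o (γ' w) = w := ray_dist_o hγ' hw0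
  have hdu : dist o (γ u) = u := ray_dist_o hγ hu
  have habs := abs_dist_sub_le (γ u) (γ' w) o
  rw [dist_comm (γ u) o, dist_comm (γ' w) o, hdu, hdw] at habs
  have hwu : dist (γ' w) (γ' u) = |w - u| := hγ'.2 w hw0 u hu
  calc dist (γ u) (γ' u) ≤ dist (γ u) (γ' w) + dist (γ' w) (γ' u) := dist_triangle _ _ _
    _ ≤ M 3 0 + |w - u| := add_le_add hwd (le_of_eq hwu)
    _ = M 3 0 + |u - w| := by rw [abs_sub_comm]
    _ ≤ M 3 0 + M 3 0 := add_le_add (le_refl _) (le_trans habs hwd)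
    _ = 2 * M 3 0 := by ring

end AsymG1
section Gauges

variable {Z : Type*} [MetricSpace Z] {o : Z}

/-- The Morse property of `γ` at parameters `(L,e)` with constant `c`. -/
def MorseProp (γ : ℝ → Z) (L e c : ℝ) : Prop :=
  ∀ (η : ℝ → Z) (a b : ℝ), a ≤ b → IsQGOn L e η (Icc a b) →
    η a ∈ γ '' Ici 0 → η b ∈ γ '' Ici 0 →
    ∀ t ∈ Icc a b, ∃ u ∈ Ici (0:ℝ), dist (η t) (γ u) ≤ c

lemma isMorseOn_iff {M : MorseGauge} {γ : ℝ → Z} :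
    IsMorseOn M γ (Ici 0) ↔ ∀ L e, 1 ≤ L → 0 ≤ e → MorseProp γ L e (M L e) :=
  Iff.rfl

lemma isMorseOn_prop {M : MorseGauge} {γ : ℝ → Z} {L e : ℝ}
    (hM : IsMorseOn M γ (Ici 0)) (hL : 1 ≤ L) (he : 0 ≤ e) :
    MorseProp γ L e (M L e) := hM L e hL he

lemma MorseProp.mono_c {γ : ℝ → Z} {L e c c' : ℝ} (h : MorseProp γ L e c) (hcc : c ≤ c') :
    MorseProp γ L e c' := by
  intro η a b hab hqg ha hb t ht
  obtain ⟨u, hu, hd⟩ := h η a b hab hqg ha hb t ht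
  exact ⟨u, hu, hd.trans hcc⟩

lemma MorseProp.anti {γ : ℝ → Z} {L e L' e' c : ℝ} (h : MorseProp γ L' e' c)
    (hL1 : 1 ≤ L) (hL : L ≤ L') (he : e ≤ e') : MorseProp γ L e c := by
  intro η a b hab hqg ha hb t ht
  exact h η a b hab (hqg.mono hL1 hL he) ha hb t ht

/-- Transfer of the Morse property along uniformly bounded distance. -/
lemma morse_transfer {γ γ' : ℝ → Z} {M : MorseGauge} {D : ℝ}
    (hγ : IsRayFrom o γ) (hγ' : IsRayFrom o γ') (hD : 0 ≤ D)
    (hclose : ∀ t ≥ (0:ℝ), dist (γ t) (γ' t) ≤ D)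
    (hM : IsMorseOn M γ' (Ici 0)) :
    IsMorseOn (fun L e => M L (e + 2*D) + D) γ (Ici 0) := by
  intro L e hL he η a b hab hqg ha hb t ht
  obtain ⟨s, hs, hsa⟩ := ha
  obtain ⟨s', hs', hsb⟩ := hb
  rw [mem_Ici] at hs hs'
  have heD : 0 ≤ e + 2*D := by linarith
  have hMnonneg : 0 ≤ M L (e + 2*D) := mgauge_nonneg hγ' hM hL heD
  by_cases hta : t = a
  · exact ⟨s, mem_Ici.2 hs, by rw [hta, ← hsa]; simp; linarith⟩
  by_cases htb : t = b
  · exact ⟨s', mem_Ici.2 hs', by rw [htb, ← hsb]; simp; linarith⟩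
  -- perturbed quasi-geodesic with endpoints on γ'
  set η' : ℝ → Z := Function.update (Function.update η a (γ' s)) b (γ' s') with hη'_def
  have hηd : ∀ x, dist (η' x) (η x) ≤ D := by
    intro x
    by_cases hxb : x = b
    · subst hxb
      rw [hη'_def, Function.update_self, ← hsb, dist_comm]
      exact hclose s' hs'
    by_cases hxa : x = a
    · subst hxa
      rw [hη'_def, Function.update_of_ne hxb, Function.update_self, ← hsa, dist_comm]
      exact hclose s hs
    · rw [hη'_def, Function.update_of_ne hxb, Function.update_of_ne hxa]
      simp [hD]
  have hqg' : IsQGOn L (e + 2*D) η' (Icc a b) := by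
    intro x hx y hy
    obtain ⟨h1, h2⟩ := hqg x hx y hy
    have d1 := hηd x
    have d2 := hηd y
    have t1 : dist (η' x) (η' y) ≤ dist (η x) (η y) + 2*D := by
      calc dist (η' x) (η' y) ≤ dist (η' x) (η x) + dist (η x) (η y) + dist (η y) (η' y) :=
            dist_triangle4 _ _ _ _
        _ ≤ D + dist (η x) (η y) + D := by
            rw [dist_comm (η y) (η' y)]; linarith
        _ = dist (η x) (η y) + 2*D := by ring
    have t2 : dist (η x) (η y) ≤ dist (η' x) (η' y) + 2*D := by
      calc dist (η x) (η y) ≤ dist (η x) (η' x) + dist (η' x) (η' y) + dist (η' y) (η y) :=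
            dist_triangle4 _ _ _ _
        _ ≤ D + dist (η' x) (η' y) + D := by
            rw [dist_comm (η x) (η' x)]; linarith
        _ = dist (η' x) (η' y) + 2*D := by ring
    constructor
    · linarith
    · linarith
  have ha' : η' a ∈ γ' '' Ici 0 := by
    by_cases hab' : a = b
    · refine ⟨s', mem_Ici.2 hs', ?_⟩
      rw [hη'_def, hab', Function.update_self]
    · refine ⟨s, mem_Ici.2 hs, ?_⟩
      rw [hη'_def, Function.update_of_ne hab', Function.update_self]
  have hb' : η' b ∈ γ' '' Ici 0 := by
    refine ⟨s', mem_Ici.2 hs', ?_⟩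
    rw [hη'_def, Function.update_self]
  obtain ⟨u, hu, hd⟩ := hM L (e + 2*D) hL heD η' a b hab hqg' ha' hb' t ht
  rw [mem_Ici] at hu
  have hη't : η' t = η t := by
    rw [hη'_def, Function.update_of_ne htb, Function.update_of_ne hta]
  refine ⟨u, mem_Ici.2 hu, ?_⟩
  calc dist (η t) (γ u) ≤ dist (η t) (γ' u) + dist (γ' u) (γ u) := dist_triangle _ _ _
    _ ≤ M L (e + 2*D) + D := by
        rw [← hη't, dist_comm (γ' u) (γ u)]
        exact add_le_add hd (hclose u hu)

/-- The optimal Morse constant of `γ` at `(L,e)`. -/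
noncomputable def needed (γ : ℝ → Z) (L e : ℝ) : ℝ :=
  sInf {c | 0 ≤ c ∧ MorseProp γ L e c}

lemma needed_nonneg {γ : ℝ → Z} {L e : ℝ} : 0 ≤ needed γ L e :=
  Real.sInf_nonneg (fun _ hx => hx.1)

lemma needed_set_nonempty {γ : ℝ → Z} {M : MorseGauge} {L e : ℝ}
    (hM : IsMorseOn M γ (Ici 0)) (hL : 1 ≤ L) (he : 0 ≤ e) :
    {c | 0 ≤ c ∧ MorseProp γ L e c}.Nonempty :=
  ⟨max (M L e) 0, le_max_right _ _, (isMorseOn_prop hM hL he).mono_c (le_max_left _ _)⟩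

lemma needed_le {γ : ℝ → Z} {L e c : ℝ} (hc : 0 ≤ c) (hp : MorseProp γ L e c) :
    needed γ L e ≤ c :=
  csInf_le ⟨0, fun _ hx => hx.1⟩ ⟨hc, hp⟩

lemma needed_mono {γ : ℝ → Z} {M : MorseGauge} {L e L' e' : ℝ}
    (hM : IsMorseOn M γ (Ici 0)) (hL1 : 1 ≤ L) (hL : L ≤ L') (he0 : 0 ≤ e) (he : e ≤ e') :
    needed γ L e ≤ needed γ L' e' := by
  apply le_csInf (needed_set_nonempty hM (le_trans hL1 hL) (le_trans he0 he))
  intro c hc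
  exact needed_le hc.1 (hc.2.anti hL1 hL he)

/-- The optimal constant works (uses properness). -/
lemma needed_spec [ProperSpace Z] {γ : ℝ → Z} {M : MorseGauge} {L e : ℝ}
    (hγ : IsRayFrom o γ) (hM : IsMorseOn M γ (Ici 0)) (hL : 1 ≤ L) (he : 0 ≤ e) :
    MorseProp γ L e (needed γ L e) := by
  intro η a b hab hqg ha hb t ht
  have hSne := needed_set_nonempty hM hL he
  have hbdd : BddBelow {c | 0 ≤ c ∧ MorseProp γ L e c} := ⟨0, fun _ hx => hx.1⟩
  -- choose approximating witnesses
  have hex : ∀ n : ℕ, ∃ u, 0 ≤ u ∧ dist (η t) (γ u) ≤ needed γ L e + 1/(n+1) := by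
    intro n
    have hpos : (0:ℝ) < 1/(n+1) := by positivity
    have hlt : needed γ L e < needed γ L e + 1/(n+1) := lt_add_of_pos_right _ hpos
    obtain ⟨c', hc'mem, hc'lt⟩ := exists_lt_of_csInf_lt hSne hlt
    obtain ⟨u, hu, hd⟩ := hc'mem.2 η a b hab hqg ha hb t ht
    exact ⟨u, mem_Ici.1 hu, hd.trans (le_of_lt hc'lt)⟩
  choose us hus0 husd using hex
  set B : ℝ := dist o (η t) + needed γ L e + 1 with hB_def
  have husB : ∀ n, us n ∈ Icc (0:ℝ) B := by
    intro n
    refine ⟨hus0 n, ?_⟩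
    have h1 : dist o (γ (us n)) = us n := ray_dist_o hγ (hus0 n)
    have h2 := dist_triangle o (η t) (γ (us n))
    have h3 : (1:ℝ)/(n+1) ≤ 1 := by
      rw [div_le_one (by positivity)]
      linarith [Nat.cast_nonneg (α := ℝ) n]
    rw [h1] at h2
    linarith [husd n]
  obtain ⟨aℓ, haℓ, φ, hφmono, hφconv⟩ := (isCompact_Icc (a := (0:ℝ)) (b := B)).tendsto_subseq husB
  refine ⟨aℓ, mem_Ici.2 haℓ.1, ?_⟩
  refine le_of_forall_pos_le_add ?_
  intro ε hε
  obtain ⟨N₂, hN₂⟩ := exists_nat_one_div_lt (by linarith : (0:ℝ) < ε/2)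
  have hconv' := Metric.tendsto_atTop.1 hφconv (ε/2) (by linarith)
  obtain ⟨N₁, hN₁⟩ := hconv'
  set n := max N₁ N₂ with hn_def
  have h1 : dist (us (φ n)) aℓ < ε/2 := hN₁ n (le_max_left _ _)
  have h2 : (1:ℝ)/(φ n + 1) ≤ 1/(n+1) := by
    apply one_div_le_one_div_of_le (by positivity)
    have hle : (n:ℝ) ≤ (φ n : ℝ) := by exact_mod_cast hφmono.le_apply
    linarith
  have h3 : (1:ℝ)/(n+1) ≤ 1/(N₂+1) := by
    apply one_div_le_one_div_of_le (by positivity)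
    have : (N₂:ℝ) ≤ n := by exact_mod_cast le_max_right N₁ N₂
    linarith
  have hgd : dist (γ (us (φ n))) (γ aℓ) = |us (φ n) - aℓ| :=
    hγ.2 (us (φ n)) (mem_Ici.2 (hus0 _)) aℓ (mem_Ici.2 haℓ.1)
  calc dist (η t) (γ aℓ) ≤ dist (η t) (γ (us (φ n))) + dist (γ (us (φ n))) (γ aℓ) :=
        dist_triangle _ _ _
    _ ≤ (needed γ L e + 1/(φ n + 1)) + |us (φ n) - aℓ| := by
        rw [hgd]; exact add_le_add (husd _) (le_refl _)
    _ ≤ needed γ L e + ε/2 + ε/2 := by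
        have : |us (φ n) - aℓ| < ε/2 := by
          rw [← Real.dist_eq]; exact h1
        have h4 : (1:ℝ)/(N₂+1) < ε/2 := hN₂
        have : (1:ℝ)/(φ n + 1) < ε/2 := by linarith
        linarith
    _ = needed γ L e + ε := by ring

/-- Monotonization of a gauge over all `M`-Morse rays from `o`. -/
noncomputable def mstar (o : Z) (M : MorseGauge) : MorseGauge := fun L e =>
  sSup {x | ∃ γ : ℝ → Z, IsRayFrom o γ ∧ IsMorseOn M γ (Ici 0) ∧
    x = needed γ (max L 1) (max e 0)}

lemma mstar_bddAbove (o : Z) (M : MorseGauge) (L e : ℝ) :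
    BddAbove {x | ∃ γ : ℝ → Z, IsRayFrom o γ ∧ IsMorseOn M γ (Ici 0) ∧
      x = needed γ (max L 1) (max e 0)} := by
  refine ⟨max (M (max L 1) (max e 0)) 0, ?_⟩
  rintro x ⟨γ, hγ, hM, rfl⟩
  exact needed_le (le_max_right _ _)
    ((isMorseOn_prop hM (le_max_right _ _) (le_max_right _ _)).mono_c (le_max_left _ _))

lemma mstar_nonneg (o : Z) (M : MorseGauge) (L e : ℝ) : 0 ≤ mstar o M L e := by
  apply Real.sSup_nonneg
  rintro x ⟨γ, hγ, hM, rfl⟩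
  exact needed_nonneg

lemma mstar_mono_e (o : Z) (M : MorseGauge) {L e e' : ℝ} (he : e ≤ e') :
    mstar o M L e ≤ mstar o M L e' := by
  rcases eq_empty_or_nonempty {x | ∃ γ : ℝ → Z, IsRayFrom o γ ∧ IsMorseOn M γ (Ici 0) ∧
      x = needed γ (max L 1) (max e 0)} with hemp | hne
  · rw [mstar, hemp, Real.sSup_empty]
    exact mstar_nonneg o M L e'
  · apply csSup_le hne
    rintro x ⟨γ, hγ, hM, rfl⟩
    calc needed γ (max L 1) (max e 0) ≤ needed γ (max L 1) (max e' 0) :=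
          needed_mono hM (le_max_right _ _) (le_refl _) (le_max_right _ _)
            (max_le_max he (le_refl 0))
      _ ≤ mstar o M L e' := le_csSup (mstar_bddAbove o M L e') ⟨γ, hγ, hM, rfl⟩

lemma ray_morse_mstar [ProperSpace Z] {γ : ℝ → Z} {M : MorseGauge}
    (hγ : IsRayFrom o γ) (hM : IsMorseOn M γ (Ici 0)) :
    IsMorseOn (mstar o M) γ (Ici 0) := by
  intro L e hL he
  have h1 : max L 1 = L := max_eq_left hL
  have h2 : max e 0 = e := max_eq_left he
  have hneed : needed γ L e ≤ mstar o M L e := by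
    apply le_csSup (mstar_bddAbove o M L e)
    exact ⟨γ, hγ, hM, by rw [h1, h2]⟩
  exact (needed_spec hγ hM hL he).mono_c hneed

/-- Right-regularization (in `e`) of the monotonization. -/
noncomputable def regg (o : Z) (M : MorseGauge) : MorseGauge := fun L e =>
  sInf {x | ∃ e', e < e' ∧ x = mstar o M L e'}

lemma regg_bddBelow (o : Z) (M : MorseGauge) (L e : ℝ) :
    BddBelow {x | ∃ e', e < e' ∧ x = mstar o M L e'} := by
  refine ⟨0, ?_⟩
  rintro x ⟨e', _, rfl⟩
  exact mstar_nonneg o M L e'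

lemma regg_nonneg (o : Z) (M : MorseGauge) (L e : ℝ) : 0 ≤ regg o M L e := by
  apply Real.sInf_nonneg
  rintro x ⟨e', _, rfl⟩
  exact mstar_nonneg o M L e'

lemma mstar_le_regg (o : Z) (M : MorseGauge) (L e : ℝ) :
    mstar o M L e ≤ regg o M L e := by
  have hne : {x | ∃ e', e < e' ∧ x = mstar o M L e'}.Nonempty :=
    ⟨mstar o M L (e+1), ⟨e+1, by linarith, rfl⟩⟩
  apply le_csInf hne
  rintro x ⟨e', he', rfl⟩
  exact mstar_mono_e o M (le_of_lt he')

lemma regg_le_mstar (o : Z) (M : MorseGauge) {L e e' : ℝ} (h : e < e') :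
    regg o M L e ≤ mstar o M L e' :=
  csInf_le (regg_bddBelow o M L e) ⟨e', h, rfl⟩

lemma regg_approx (o : Z) (M : MorseGauge) (L e : ℝ) {θ : ℝ} (hθ : 0 < θ) :
    ∃ e', e < e' ∧ mstar o M L e' ≤ regg o M L e + θ := by
  by_contra hcon
  push_neg at hcon
  have : regg o M L e + θ ≤ regg o M L e := by
    have hne : {x | ∃ e', e < e' ∧ x = mstar o M L e'}.Nonempty :=
      ⟨mstar o M L (e+1), ⟨e+1, by linarith, rfl⟩⟩
    apply le_csInf hne
    rintro x ⟨e', he', rfl⟩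
    exact le_of_lt (hcon e' he')
  linarith

lemma ray_morse_regg [ProperSpace Z] {γ : ℝ → Z} {M : MorseGauge}
    (hγ : IsRayFrom o γ) (hM : IsMorseOn M γ (Ici 0)) :
    IsMorseOn (regg o M) γ (Ici 0) := by
  intro L e hL he
  exact MorseProp.mono_c (ray_morse_mstar hγ hM L e hL he) (mstar_le_regg o M L e)

end Gauges
section Limits

open Filter Topology

variable {Z : Type*} [MetricSpace Z] {o : Z} {ι : Type*}

lemma limit_ray {F : Ultrafilter ι} {rp : ι → ℝ → Z} {glim : ℝ → Z}
    (hray : ∀ i, IsRayFrom o (rp i))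
    (hlim : ∀ t ≥ (0:ℝ), Tendsto (fun i => rp i t) ↑F (𝓝 (glim t))) :
    IsRayFrom o glim := by
  constructor
  · have h1 : Tendsto (fun i => rp i 0) ↑F (𝓝 (glim 0)) := hlim 0 (le_refl 0)
    have h2 : Tendsto (fun _ : ι => o) ↑F (𝓝 o) := tendsto_const_nhds
    have : (fun i => rp i 0) = fun _ : ι => o := funext fun i => (hray i).1
    rw [this] at h1
    exact tendsto_nhds_unique h1 h2
  · intro t ht u hu
    have h1 : Tendsto (fun i => dist (rp i t) (rp i u)) ↑F
        (𝓝 (dist (glim t) (glim u))) := (hlim t ht).dist (hlim u hu)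
    have : (fun i => dist (rp i t) (rp i u)) = fun _ : ι => |t - u| :=
      funext fun i => (hray i).2 t ht u hu
    rw [this] at h1
    exact tendsto_nhds_unique h1 tendsto_const_nhds

/-- Pointwise ultrafilter limits of `regg`-Morse rays are `regg`-Morse. -/
lemma limit_morse [ProperSpace Z] {M : MorseGauge} {F : Ultrafilter ι}
    {rp : ι → ℝ → Z} {glim : ℝ → Z}
    (hray : ∀ i, IsRayFrom o (rp i))
    (hmorse : ∀ᶠ i in ↑F, IsMorseOn (regg o M) (rp i) (Ici 0))
    (hlim : ∀ t ≥ (0:ℝ), Tendsto (fun i => rp i t) ↑F (𝓝 (glim t))) :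
    IsMorseOn (regg o M) glim (Ici 0) := by
  classical
  have hglim : IsRayFrom o glim := limit_ray hray hlim
  intro L e hL he η a b hab hqg ha hb t ht
  obtain ⟨s, hs, hsa⟩ := ha
  obtain ⟨s', hs', hsb⟩ := hb
  rw [mem_Ici] at hs hs'
  by_cases hta : t = a
  · refine ⟨s, mem_Ici.2 hs, ?_⟩
    rw [hta, ← hsa, dist_self]
    exact regg_nonneg o M L e
  by_cases htb : t = b
  · refine ⟨s', mem_Ici.2 hs', ?_⟩
    rw [htb, ← hsb, dist_self]
    exact regg_nonneg o M L e
  -- main case: approximate to accuracy θ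
  have claim : ∀ θ : ℝ, 0 < θ → θ ≤ 1 → ∃ u, 0 ≤ u ∧
      u ≤ dist o (η t) + regg o M L e + 1 ∧ dist (η t) (glim u) ≤ regg o M L e + θ := by
    intro θ hθ hθ1
    obtain ⟨ep, hep, hmp⟩ := regg_approx o M L e hθ
    set e' : ℝ := (e + ep)/2 with he'_def
    have hee' : e < e' := by rw [he'_def]; linarith
    have he'ep : e' < ep := by rw [he'_def]; linarith
    have he'0 : 0 ≤ e' := by linarith
    have hKey : regg o M L e' ≤ regg o M L e + θ :=
      le_trans (regg_le_mstar o M he'ep) hmp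
    set ε : ℝ := (e' - e)/2 with hε_def
    have hεpos : 0 < ε := by rw [hε_def]; linarith
    set B : ℝ := dist o (η t) + regg o M L e + 1 with hB_def
    have hB0 : 0 ≤ B := by
      have := regg_nonneg o M L e
      have := dist_nonneg (x := o) (y := η t)
      rw [hB_def]; linarith
    -- the F-large set of good indices
    have hev1 : ∀ᶠ i in ↑F, dist (rp i s) (glim s) < ε := by
      have := Metric.tendsto_nhds.1 (hlim s hs) ε hεpos
      exact this
    have hev2 : ∀ᶠ i in ↑F, dist (rp i s') (glim s') < ε := by
      exact Metric.tendsto_nhds.1 (hlim s' hs') ε hεpos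
    have hgood : ∀ᶠ i in ↑F, IsMorseOn (regg o M) (rp i) (Ici 0) ∧
        dist (rp i s) (glim s) < ε ∧ dist (rp i s') (glim s') < ε :=
      hmorse.and (hev1.and hev2)
    -- for good indices, find a witness
    have hwitness : ∀ i, (IsMorseOn (regg o M) (rp i) (Ici 0) ∧
        dist (rp i s) (glim s) < ε ∧ dist (rp i s') (glim s') < ε) →
        ∃ v, 0 ≤ v ∧ v ≤ B ∧ dist (η t) (rp i v) ≤ regg o M L e' := by
      rintro i ⟨hMi, hd1, hd2⟩
      set η' : ℝ → Z := Function.update (Function.update η a (rp i s)) b (rp i s')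
        with hη'_def
      have hηd : ∀ x, dist (η' x) (η x) ≤ ε := by
        intro x
        by_cases hxb : x = b
        · subst hxb
          rw [hη'_def, Function.update_self, ← hsb]
          exact le_of_lt hd2
        by_cases hxa : x = a
        · subst hxa
          rw [hη'_def, Function.update_of_ne hxb, Function.update_self, ← hsa]
          exact le_of_lt hd1
        · rw [hη'_def, Function.update_of_ne hxb, Function.update_of_ne hxa, dist_self]
          exact le_of_lt hεpos
      have hqg' : IsQGOn L e' η' (Icc a b) := by
        intro x hx y hy
        obtain ⟨h1, h2⟩ := hqg x hx y hy
        have d1 := hηd x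
        have d2 := hηd y
        have t1 : dist (η' x) (η' y) ≤ dist (η x) (η y) + 2*ε := by
          calc dist (η' x) (η' y) ≤ dist (η' x) (η x) + dist (η x) (η y) + dist (η y) (η' y) :=
                dist_triangle4 _ _ _ _
            _ ≤ ε + dist (η x) (η y) + ε := by
                rw [dist_comm (η y) (η' y)]; linarith
            _ = dist (η x) (η y) + 2*ε := by ring
        have t2 : dist (η x) (η y) ≤ dist (η' x) (η' y) + 2*ε := by
          calc dist (η x) (η y) ≤ dist (η x) (η' x) + dist (η' x) (η' y) + dist (η' y) (η y) :=
                dist_triangle4 _ _ _ _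
            _ ≤ ε + dist (η' x) (η' y) + ε := by
                rw [dist_comm (η x) (η' x)]; linarith
            _ = dist (η' x) (η' y) + 2*ε := by ring
        have h2ε : e + 2*ε = e' := by rw [hε_def]; ring
        constructor
        · linarith
        · linarith
      have ha' : η' a ∈ rp i '' Ici 0 := by
        by_cases hab' : a = b
        · exact ⟨s', mem_Ici.2 hs', by rw [hη'_def, hab', Function.update_self]⟩
        · exact ⟨s, mem_Ici.2 hs, by
            rw [hη'_def, Function.update_of_ne hab', Function.update_self]⟩
      have hb' : η' b ∈ rp i '' Ici 0 := ⟨s', mem_Ici.2 hs', by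
        rw [hη'_def, Function.update_self]⟩
      obtain ⟨v, hv, hvd⟩ := hMi L e' hL he'0 η' a b hab hqg' ha' hb' t ht
      rw [mem_Ici] at hv
      have hη't : η' t = η t := by
        rw [hη'_def, Function.update_of_ne htb, Function.update_of_ne hta]
      rw [hη't] at hvd
      refine ⟨v, hv, ?_, hvd⟩
      have h1 : dist o (rp i v) = v := ray_dist_o (hray i) hv
      have h2 := dist_triangle o (η t) (rp i v)
      rw [h1] at h2
      have h3 := hvd.trans hKey
      rw [hB_def]
      linarith
    -- choose witnesses and take the ultrafilter limit
    set u : ι → ℝ := fun i => if h : ∃ v, 0 ≤ v ∧ v ≤ B ∧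
        dist (η t) (rp i v) ≤ regg o M L e' then h.choose else 0 with hu_def
    have humem : ∀ i, u i ∈ Icc (0:ℝ) B := by
      intro i
      rw [hu_def]
      by_cases h : ∃ v, 0 ≤ v ∧ v ≤ B ∧ dist (η t) (rp i v) ≤ regg o M L e'
      · simp only [dif_pos h]
        exact ⟨h.choose_spec.1, h.choose_spec.2.1⟩
      · simp only [dif_neg h]
        exact ⟨le_refl 0, hB0⟩
    have hud : ∀ᶠ i in ↑F, dist (η t) (rp i (u i)) ≤ regg o M L e' := by
      filter_upwards [hgood] with i hi
      have h := hwitness i hi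
      rw [hu_def]
      simp only [dif_pos h]
      exact h.choose_spec.2.2
    have hmapmem : ↑(F.map u) ≤ Filter.principal (Icc (0:ℝ) B) := by
      rw [Ultrafilter.coe_map, Filter.le_principal_iff, Filter.mem_map]
      exact Filter.univ_mem' humem
    obtain ⟨ustar, hustar, hconv⟩ :=
      (isCompact_Icc (a := (0:ℝ)) (b := B)).ultrafilter_le_nhds (F.map u) hmapmem
    rw [Ultrafilter.coe_map] at hconv
    have hconv' : Tendsto u ↑F (𝓝 ustar) := hconv
    -- rp i (u i) → glim ustar
    have htend : Tendsto (fun i => rp i (u i)) ↑F (𝓝 (glim ustar)) := by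
      rw [tendsto_iff_dist_tendsto_zero]
      have hbound : ∀ i, dist (rp i (u i)) (glim ustar) ≤
          |u i - ustar| + dist (rp i ustar) (glim ustar) := by
        intro i
        calc dist (rp i (u i)) (glim ustar) ≤
            dist (rp i (u i)) (rp i ustar) + dist (rp i ustar) (glim ustar) :=
              dist_triangle _ _ _
          _ = |u i - ustar| + dist (rp i ustar) (glim ustar) := by
              rw [(hray i).2 (u i) (mem_Ici.2 (humem i).1) ustar (mem_Ici.2 hustar.1)]
      have hg : Tendsto (fun i => |u i - ustar| + dist (rp i ustar) (glim ustar)) ↑F (𝓝 0) := by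
        have hg1 : Tendsto (fun i => |u i - ustar|) ↑F (𝓝 0) := by
          have := tendsto_iff_dist_tendsto_zero.1 hconv'
          simpa [Real.dist_eq] using this
        have hg2 : Tendsto (fun i => dist (rp i ustar) (glim ustar)) ↑F (𝓝 0) :=
          tendsto_iff_dist_tendsto_zero.1 (hlim ustar hustar.1)
        simpa using hg1.add hg2
      exact squeeze_zero (fun i => dist_nonneg) hbound hg
    have hdist : Tendsto (fun i => dist (η t) (rp i (u i))) ↑F
        (𝓝 (dist (η t) (glim ustar))) := tendsto_const_nhds.dist htend
    have hfinal : dist (η t) (glim ustar) ≤ regg o M L e' := le_of_tendsto hdist hud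
    exact ⟨ustar, hustar.1, (by rw [hB_def] at hustar; exact hustar.2),
      hfinal.trans hKey⟩
  -- extract a limit witness over θ → 0
  set B₁ : ℝ := dist o (η t) + regg o M L e + 1 with hB₁_def
  have hseq : ∀ n : ℕ, ∃ u, 0 ≤ u ∧ u ≤ B₁ ∧
      dist (η t) (glim u) ≤ regg o M L e + 1/(n+1) := by
    intro n
    have h1 : (0:ℝ) < 1/(n+1) := by positivity
    have h2 : (1:ℝ)/(n+1) ≤ 1 := by
      rw [div_le_one (by positivity)]
      linarith [Nat.cast_nonneg (α := ℝ) n]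
    obtain ⟨u, hu0, huB, hud⟩ := claim (1/(n+1)) h1 h2
    exact ⟨u, hu0, huB, hud⟩
  choose us hus0 husB husd using hseq
  have husmem : ∀ n, us n ∈ Icc (0:ℝ) B₁ := fun n => ⟨hus0 n, husB n⟩
  obtain ⟨aℓ, haℓ, φ, hφmono, hφconv⟩ :=
    (isCompact_Icc (a := (0:ℝ)) (b := B₁)).tendsto_subseq husmem
  refine ⟨aℓ, mem_Ici.2 haℓ.1, ?_⟩
  refine le_of_forall_pos_le_add ?_
  intro ε hε
  obtain ⟨N₂, hN₂⟩ := exists_nat_one_div_lt (by linarith : (0:ℝ) < ε/2)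
  obtain ⟨N₁, hN₁⟩ := Metric.tendsto_atTop.1 hφconv (ε/2) (by linarith)
  set n := max N₁ N₂ with hn_def
  have h1 : dist (us (φ n)) aℓ < ε/2 := hN₁ n (le_max_left _ _)
  have h2 : (1:ℝ)/(φ n + 1) ≤ 1/(n+1) := by
    apply one_div_le_one_div_of_le (by positivity)
    have hle : (n:ℝ) ≤ (φ n : ℝ) := by exact_mod_cast hφmono.le_apply
    linarith
  have h3 : (1:ℝ)/(n+1) ≤ 1/(N₂+1) := by
    apply one_div_le_one_div_of_le (by positivity)
    have : (N₂:ℝ) ≤ n := by exact_mod_cast le_max_right N₁ N₂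
    linarith
  have hgd : dist (glim (us (φ n))) (glim aℓ) = |us (φ n) - aℓ| :=
    hglim.2 (us (φ n)) (mem_Ici.2 (hus0 _)) aℓ (mem_Ici.2 haℓ.1)
  calc dist (η t) (glim aℓ) ≤ dist (η t) (glim (us (φ n))) + dist (glim (us (φ n))) (glim aℓ) :=
        dist_triangle _ _ _
    _ ≤ (regg o M L e + 1/(φ n + 1)) + |us (φ n) - aℓ| := by
        rw [hgd]; exact add_le_add (husd _) (le_refl _)
    _ ≤ regg o M L e + ε/2 + ε/2 := by
        have ha : |us (φ n) - aℓ| < ε/2 := by rw [← Real.dist_eq]; exact h1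
        have hb : (1:ℝ)/(φ n + 1) < ε/2 := lt_of_le_of_lt (h2.trans h3) hN₂
        linarith
    _ = regg o M L e + ε := by ring

end Limits
section Boundary

open Filter Topology

variable {Z : Type*} [MetricSpace Z] {o : Z}

/-- Canonical representative of a boundary point. -/
noncomputable def crep (z : MorseBoundaryR Z o) : MRayR Z o :=
  (Quot.exists_rep z).choose

lemma crep_spec (z : MorseBoundaryR Z o) : Quot.mk _ (crep z) = z :=
  (Quot.exists_rep z).choose_spec

/-- Canonical (monotone-clamped) optimal gauge of a boundary point. -/
noncomputable def cgauge (z : MorseBoundaryR Z o) : MorseGauge :=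
  fun L e => needed (crep z).1 (max L 1) (max e 0)

lemma stratum_mono {M M' : MorseGauge} (h : ∀ L e, 1 ≤ L → 0 ≤ e → M L e ≤ M' L e) :
    stratumR Z o M ⊆ stratumR Z o M' := by
  rintro z ⟨γ, hγM, hq⟩
  exact ⟨γ, hγM.mono_gauge h, hq⟩

lemma stratum_subset_regg [ProperSpace Z] (M : MorseGauge) :
    stratumR Z o M ⊆ stratumR Z o (regg o M) := by
  rintro z ⟨γ, hγM, hq⟩
  exact ⟨γ, ray_morse_regg γ.2.1 hγM, hq⟩

lemma rel_of_classes_eq {γ γ' : MRayR Z o}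
    (h : (Quot.mk _ γ : MorseBoundaryR Z o) = Quot.mk _ γ') :
    ∃ C, ∀ t ≥ (0:ℝ), dist (γ.1 t) (γ'.1 t) ≤ C :=
  class_eq_iff.1 h

/-- Inflation of a gauge at `(5,0)`. -/
noncomputable def infl (N : MorseGauge) : MorseGauge :=
  fun L e => if L = 5 ∧ e = 0 then N 5 0 + N 3 0 + 1 else N L e

lemma infl_ge {N : MorseGauge} (hN : 0 ≤ N 3 0) :
    ∀ L e, 1 ≤ L → 0 ≤ e → N L e ≤ infl N L e := by
  intro L e _ _
  rw [infl]
  by_cases h : L = 5 ∧ e = 0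
  · rw [if_pos h, h.1, h.2]; linarith
  · rw [if_neg h]

lemma infl_30 (N : MorseGauge) : infl N 3 0 = N 3 0 := by
  rw [infl, if_neg (by norm_num)]

lemma infl_one (N : MorseGauge) (e : ℝ) : infl N 1 e = N 1 e := by
  rw [infl, if_neg (by norm_num)]

lemma infl_50 (N : MorseGauge) : infl N 5 0 = N 5 0 + N 3 0 + 1 := by
  rw [infl, if_pos ⟨rfl, rfl⟩]

lemma delta_infl_regg (M : MorseGauge) :
    2 * regg o M 3 0 + 1 < deltaM (infl (regg o M)) := by
  have h50 : infl (regg o M) 5 0 = regg o M 5 0 + regg o M 3 0 + 1 := infl_50 _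
  have hge : 4 * infl (regg o M) 1 (2 * infl (regg o M) 5 0) + 2 * infl (regg o M) 5 0 ≤
      deltaM (infl (regg o M)) := le_max_left _ _
  rw [h50, infl_one] at hge
  have hn1 : 0 ≤ regg o M 1 (2 * (regg o M 5 0 + regg o M 3 0 + 1)) := regg_nonneg o M _ _
  have hn5 : 0 ≤ regg o M 5 0 := regg_nonneg o M _ _
  linarith

lemma UR_antitone {M : MorseGauge} {z : MorseBoundaryR Z o} {n n' : ℝ} (h : n' ≤ n) :
    UR o M n z ⊆ UR o M n' z := by
  rintro w ⟨η, h1, h2, h3⟩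
  exact ⟨η, h1, h2, fun ξ hξ hq t ht => h3 ξ hξ hq t ⟨ht.1, ht.2.trans h⟩⟩

/-- Membership in a stratum bounds the canonical gauge. -/
lemma cgauge_le_of_stratum [ProperSpace Z] (hZ : GeodesicSpace Z)
    {R : MorseGauge} {z : MorseBoundaryR Z o} (hz : z ∈ stratumR Z o R) (L e : ℝ) :
    cgauge z L e ≤ R (max L 1) (max e 0 + 2*(2 * R 3 0)) + 2 * R 3 0 := by
  obtain ⟨η, hηR, hηq⟩ := hz
  have hD0 : 0 ≤ 2 * R 3 0 := by
    have := mgauge_nonneg η.2.1 hηR (by norm_num : (1:ℝ) ≤ 3) (le_refl 0)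
    linarith
  obtain ⟨C, hC⟩ := rel_of_classes_eq ((crep_spec z).trans hηq.symm)
  have hclose : ∀ t ≥ (0:ℝ), dist ((crep z).1 t) (η.1 t) ≤ 2 * R 3 0 :=
    asymG1 hZ (crep z).2.1 η.2.1 hηR hC
  have htrans : IsMorseOn (fun L e => R L (e + 2*(2 * R 3 0)) + 2 * R 3 0)
      (crep z).1 (Ici 0) :=
    morse_transfer (crep z).2.1 η.2.1 hD0 hclose hηR
  have hL1 : (1:ℝ) ≤ max L 1 := le_max_right _ _
  have he0 : (0:ℝ) ≤ max e 0 := le_max_right _ _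
  apply needed_le
  · have := mgauge_nonneg η.2.1 hηR hL1 (by linarith : (0:ℝ) ≤ max e 0 + 2*(2 * R 3 0))
    linarith
  · exact isMorseOn_prop htrans hL1 he0

/-- Every boundary point lies in some stratum. -/
lemma exists_stratum (z : MorseBoundaryR Z o) : ∃ M, z ∈ stratumR Z o M := by
  obtain ⟨M₀, hM₀⟩ := (crep z).2.2
  exact ⟨M₀, ⟨crep z, hM₀, crep_spec z⟩⟩

/-- The canonical gauge realizes membership. -/
lemma mem_stratum_of_cgauge_le [ProperSpace Z] {z : MorseBoundaryR Z o} {P : MorseGauge}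
    (h : ∀ L e, 1 ≤ L → 0 ≤ e → cgauge z L e ≤ P L e) : z ∈ stratumR Z o P := by
  refine ⟨crep z, ?_, crep_spec z⟩
  intro L e hL he
  obtain ⟨M₀, hM₀⟩ := (crep z).2.2
  have hspec : MorseProp (crep z).1 L e (needed (crep z).1 L e) :=
    needed_spec (crep z).2.1 hM₀ hL he
  have hle : needed (crep z).1 L e ≤ P L e := by
    have := h L e hL he
    rw [cgauge, max_eq_left hL, max_eq_left he] at this
    exact this
  exact hspec.mono_c hle

lemma isOpen_morse_iff {O : Set (MorseBoundaryR Z o)} :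
    IsOpen[morseTopologyR Z o] O ↔ ∀ M z, z ∈ O → MorseDirR o M z →
      ∃ n : ℝ, UR o M n z ∩ stratumR Z o M ⊆ O :=
  Iff.rfl

end Boundary
section Compactness

open Filter Topology

variable {Z : Type*} [MetricSpace Z] {o : Z}

/-- The regularized strata are compact in the Morse topology. -/
lemma stratum_regg_compact [ProperSpace Z] (hZ : GeodesicSpace Z) (M : MorseGauge) :
    @IsCompact _ (morseTopologyR Z o) (stratumR Z o (regg o M)) := by
  classical
  letI := morseTopologyR Z o
  rw [isCompact_iff_ultrafilter_le_nhds]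
  intro F hF
  have hS : stratumR Z o (regg o M) ∈ F := Filter.le_principal_iff.1 hF
  -- choice of representatives
  set rep : MorseBoundaryR Z o → MRayR Z o := fun z =>
    if h : MorseDirR o (regg o M) z then h.choose else crep z with hrep_def
  have hrepq : ∀ z, Quot.mk _ (rep z) = z := by
    intro z
    show Quot.mk _ (if h : MorseDirR o (regg o M) z then h.choose else crep z) = z
    by_cases h : MorseDirR o (regg o M) z
    · rw [dif_pos h]; exact h.choose_spec.2
    · rw [dif_neg h]; exact crep_spec z
  have hrepray : ∀ z, IsRayFrom o (rep z).1 := fun z => (rep z).2.1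
  have hrepM : ∀ z ∈ stratumR Z o (regg o M), IsMorseOn (regg o M) (rep z).1 (Ici 0) := by
    intro z hz
    have hz' : MorseDirR o (regg o M) z := hz
    show IsMorseOn (regg o M) (if h : MorseDirR o (regg o M) z then h.choose else crep z).1 (Ici 0)
    rw [dif_pos hz']
    exact hz'.choose_spec.1
  have hmorse : ∀ᶠ z in ↑F, IsMorseOn (regg o M) (rep z).1 (Ici 0) :=
    Filter.mem_of_superset hS hrepM
  -- pointwise ultrafilter limits
  have hex : ∀ t : ℝ, 0 ≤ t → ∃ x, Tendsto (fun z => (rep z).1 t) ↑F (𝓝 x) := by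
    intro t ht
    have hmem : ↑(F.map (fun z => (rep z).1 t)) ≤
        Filter.principal (Metric.closedBall o t) := by
      rw [Ultrafilter.coe_map, Filter.le_principal_iff, Filter.mem_map]
      apply Filter.univ_mem'
      intro z
      show (rep z).1 t ∈ Metric.closedBall o t
      rw [Metric.mem_closedBall, dist_comm, ray_dist_o (hrepray z) ht]
    obtain ⟨x, _, hx⟩ := (isCompact_closedBall o t).ultrafilter_le_nhds
      (F.map (fun z => (rep z).1 t)) hmem
    rw [Ultrafilter.coe_map] at hx
    exact ⟨x, hx⟩
  set glim : ℝ → Z := fun t => if ht : 0 ≤ t then (hex t ht).choose else o with hglim_def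
  have hlim : ∀ t ≥ (0:ℝ), Tendsto (fun z => (rep z).1 t) ↑F (𝓝 (glim t)) := by
    intro t ht
    have hgt : glim t = (hex t ht).choose := dif_pos ht
    rw [hgt]
    exact (hex t ht).choose_spec
  have hglimray : IsRayFrom o glim := limit_ray hrepray hlim
  have hglimM : IsMorseOn (regg o M) glim (Ici 0) := limit_morse hrepray hmorse hlim
  set gpkg : MRayR Z o := ⟨glim, hglimray, ⟨regg o M, hglimM⟩⟩ with hgpkg_def
  refine ⟨Quot.mk _ gpkg, ⟨gpkg, hglimM, rfl⟩, ?_⟩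
  -- F tends to the limit point
  intro O hO
  obtain ⟨O', hO'sub, hO'open, hzO'⟩ := mem_nhds_iff.1 hO
  refine Filter.mem_of_superset ?_ hO'sub
  -- use openness at the inflated gauge
  have hr30 : 0 ≤ regg o M 3 0 := regg_nonneg o M 3 0
  set W : MorseGauge := infl (regg o M) with hW_def
  have hWge := infl_ge (N := regg o M) hr30
  have hdir : MorseDirR o W (Quot.mk _ gpkg) :=
    ⟨gpkg, hglimM.mono_gauge hWge, rfl⟩
  obtain ⟨n, hn⟩ := (isOpen_morse_iff.1 hO'open) W (Quot.mk _ gpkg) hzO' hdir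
  refine Filter.mem_of_superset ?_ hn
  -- the F-large set of uniformly close representatives
  set T : ℝ := max n 0 with hT_def
  have hT0 : 0 ≤ T := le_max_right _ _
  set Jmax : ℕ := ⌈(4:ℝ) * T⌉₊ with hJ_def
  have hGj : ∀ j : ℕ, j ∈ Finset.range (Jmax + 1) →
      {z | dist ((rep z).1 (j/4)) (glim (j/4)) < 1/4} ∈ F := by
    intro j _
    have hj4 : (0:ℝ) ≤ j/4 := by positivity
    exact Metric.tendsto_nhds.1 (hlim (j/4) hj4) (1/4) (by norm_num)
  have hVmem : (stratumR Z o (regg o M) ∩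
      ⋂ j ∈ Finset.range (Jmax + 1), {z | dist ((rep z).1 (j/4)) (glim (j/4)) < 1/4}) ∈ F :=
    Filter.inter_mem hS ((Filter.biInter_finset_mem _).2 hGj)
  apply Filter.mem_of_superset hVmem
  rintro z ⟨hzS, hzJ⟩
  rw [Set.mem_iInter₂] at hzJ
  -- uniform closeness on [0, T]
  have hclose : ∀ t ∈ Icc (0:ℝ) T, dist ((rep z).1 t) (glim t) ≤ 3/4 := by
    intro t ht
    set j : ℕ := ⌊(4:ℝ) * t⌋₊ with hj_def
    have h4t : (0:ℝ) ≤ 4 * t := by linarith [ht.1]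
    have hjle : (j:ℝ) ≤ 4 * t := Nat.floor_le h4t
    have hjlt : 4 * t < (j:ℝ) + 1 := Nat.lt_floor_add_one _
    have hjmem : j ∈ Finset.range (Jmax + 1) := by
      rw [Finset.mem_range, Nat.lt_succ_iff, hJ_def]
      apply le_trans (Nat.floor_mono (by linarith [ht.2] : (4:ℝ)*t ≤ 4*T))
      exact Nat.floor_le_ceil _
    have hj40 : (0:ℝ) ≤ j/4 := by positivity
    have habs : |t - j/4| ≤ 1/4 := by
      rw [abs_le]
      constructor <;> [linarith; linarith]
    have h1 : dist ((rep z).1 t) ((rep z).1 (j/4)) = |t - j/4| :=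
      (hrepray z).2 t ht.1 (j/4) hj40
    have h2 : dist (glim (j/4)) (glim t) = |j/4 - t| :=
      hglimray.2 (j/4) hj40 t ht.1
    have h3 := hzJ j hjmem
    calc dist ((rep z).1 t) (glim t) ≤
        dist ((rep z).1 t) ((rep z).1 (j/4)) + dist ((rep z).1 (j/4)) (glim (j/4))
          + dist (glim (j/4)) (glim t) := dist_triangle4 _ _ _ _
      _ ≤ 1/4 + 1/4 + 1/4 := by
          rw [h1, h2, abs_sub_comm (j/4 : ℝ) t]
          exact add_le_add (add_le_add habs (le_of_lt h3)) habs
      _ = 3/4 := by norm_num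
  -- conclude membership in UR ∩ stratum
  constructor
  · refine ⟨rep z, hrepq z, (hrepM z hzS).mono_gauge hWge, ?_⟩
    intro ξ hξW hξq t ht
    obtain ⟨C, hC⟩ := rel_of_classes_eq (hξq.trans rfl)
    have hCg : ∀ s ≥ (0:ℝ), dist (glim s) (ξ.1 s) ≤ C := by
      intro s hs
      rw [dist_comm]
      exact hC s hs
    have hG1 : ∀ s ≥ (0:ℝ), dist (glim s) (ξ.1 s) ≤ 2 * W 3 0 :=
      asymG1 hZ hglimray ξ.2.1 hξW hCg
    have ht0 : 0 ≤ t := ht.1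
    have htT : t ≤ T := le_trans ht.2 (le_max_left _ _)
    have hW30 : W 3 0 = regg o M 3 0 := infl_30 _
    calc dist ((rep z).1 t) (ξ.1 t) ≤
        dist ((rep z).1 t) (glim t) + dist (glim t) (ξ.1 t) := dist_triangle _ _ _
      _ ≤ 3/4 + 2 * regg o M 3 0 := by
          rw [← hW30]
          exact add_le_add (hclose t ⟨ht0, htT⟩) (hG1 t ht0)
      _ < deltaM W := by
          have := delta_infl_regg (o := o) M
          rw [← hW_def] at this
          linarith
  · exact ⟨rep z, (hrepM z hzS).mono_gauge hWge, hrepq z⟩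

end Compactness
section Lemma41

open Filter Topology

variable {Z : Type*} [MetricSpace Z] {o : Z}

/-- A set of boundary points with escaping canonical gauges is closed. -/
lemma closed_escaping [ProperSpace Z] (hZ : GeodesicSpace Z) {L₀ e₀ : ℝ}
    {zk : ℕ → MorseBoundaryR Z o} (hesc : ∀ k : ℕ, (k:ℝ) ≤ cgauge (zk k) L₀ e₀) (j : ℕ) :
    @IsClosed _ (morseTopologyR Z o) {v | ∃ k, j ≤ k ∧ zk k = v} := by
  classical
  letI := morseTopologyR Z o
  rw [← isOpen_compl_iff]
  rw [isOpen_morse_iff]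
  intro R w hw hdir
  obtain ⟨ξ₀, hξ₀R, hξ₀q⟩ := hdir
  have hD0 : 0 ≤ 2 * R 3 0 := by
    have := mgauge_nonneg ξ₀.2.1 hξ₀R (by norm_num : (1:ℝ) ≤ 3) (le_refl 0)
    linarith
  set β : ℝ := R (max L₀ 1) (max e₀ 0 + 2*(2 * R 3 0)) + 2 * R 3 0 with hβ_def
  -- for each escaping point distinct from w, some UR excludes it
  have hexcl : ∀ k, j ≤ k → ∃ n, 0 ≤ n ∧ zk k ∉ UR o R n w := by
    intro k hk
    by_contra hcon
    push_neg at hcon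
    -- then the canonical representative of zk k is boundedly close to ξ₀
    have hclose : ∀ t ≥ (0:ℝ), dist ((crep (zk k)).1 t) (ξ₀.1 t) ≤
        2 * R 3 0 + deltaM R := by
      intro t ht
      obtain ⟨η, hηq, hηR, hηcl⟩ := hcon t ht
      obtain ⟨C, hC⟩ := rel_of_classes_eq ((crep_spec (zk k)).trans hηq.symm)
      have hG1 : ∀ s ≥ (0:ℝ), dist ((crep (zk k)).1 s) (η.1 s) ≤ 2 * R 3 0 :=
        asymG1 hZ (crep (zk k)).2.1 η.2.1 hηR hC
      have h2 := hηcl ξ₀ hξ₀R hξ₀q t ⟨ht, le_refl t⟩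
      calc dist ((crep (zk k)).1 t) (ξ₀.1 t) ≤
          dist ((crep (zk k)).1 t) (η.1 t) + dist (η.1 t) (ξ₀.1 t) := dist_triangle _ _ _
        _ ≤ 2 * R 3 0 + deltaM R := add_le_add (hG1 t ht) (le_of_lt h2)
    have heq : zk k = w := by
      rw [← crep_spec (zk k), ← hξ₀q]
      exact Quot.sound ⟨2 * R 3 0 + deltaM R, hclose⟩
    exact hw ⟨k, hk, heq⟩
  set nk : ℕ → ℝ := fun k => if h : ∃ n, 0 ≤ n ∧ zk k ∉ UR o R n w then h.choose else 0
    with hnk_def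
  have hnk0 : ∀ k, 0 ≤ nk k := by
    intro k
    show 0 ≤ if h : ∃ n, 0 ≤ n ∧ zk k ∉ UR o R n w then h.choose else 0
    by_cases h : ∃ n, 0 ≤ n ∧ zk k ∉ UR o R n w
    · rw [dif_pos h]; exact h.choose_spec.1
    · rw [dif_neg h]
  have hnkspec : ∀ k, j ≤ k → zk k ∉ UR o R (nk k) w := by
    intro k hk
    have h := hexcl k hk
    show zk k ∉ UR o R (if h : ∃ n, 0 ≤ n ∧ zk k ∉ UR o R n w then h.choose else 0) w
    rw [dif_pos h]
    exact h.choose_spec.2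
  set n : ℝ := ∑ k ∈ Finset.range (⌈β⌉₊ + 1), nk k with hn_def
  refine ⟨n, ?_⟩
  rintro v ⟨hvUR, hvS⟩ hvA
  obtain ⟨k, hk, hkv⟩ := hvA
  -- bound k by β using the stratum membership
  have hb := cgauge_le_of_stratum hZ hvS L₀ e₀
  rw [← hkv] at hb
  have hkβ : (k:ℝ) ≤ β := le_trans (hesc k) hb
  have hkmem : k ∈ Finset.range (⌈β⌉₊ + 1) := by
    rw [Finset.mem_range, Nat.lt_succ_iff]
    have : (k:ℝ) ≤ (⌈β⌉₊ : ℝ) := le_trans hkβ (Nat.le_ceil β)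
    exact_mod_cast this
  have hnkn : nk k ≤ n := by
    rw [hn_def]
    exact Finset.single_le_sum (fun i _ => hnk0 i) hkmem
  have := hnkspec k hk
  rw [hkv] at this
  exact this (UR_antitone hnkn hvUR)

/-- Lemma 4.1: every compact set of the Morse boundary lies in one stratum. -/
lemma compact_in_stratum [ProperSpace Z] (hZ : GeodesicSpace Z)
    {K : Set (MorseBoundaryR Z o)} (hK : @IsCompact _ (morseTopologyR Z o) K) :
    ∃ P : MorseGauge, K ⊆ stratumR Z o P := by
  classical
  letI := morseTopologyR Z o
  by_cases hb : ∀ L e : ℝ, BddAbove {x | ∃ z ∈ K, x = cgauge z L e}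
  · refine ⟨fun L e => sSup {x | ∃ z ∈ K, x = cgauge z L e}, ?_⟩
    intro z hz
    apply mem_stratum_of_cgauge_le
    intro L e hL he
    exact le_csSup (hb L e) ⟨z, hz, rfl⟩
  · push_neg at hb
    obtain ⟨L₀, e₀, hub⟩ := hb
    have hex : ∀ k : ℕ, ∃ z ∈ K, (k:ℝ) ≤ cgauge z L₀ e₀ := by
      intro k
      rw [not_bddAbove_iff] at hub
      obtain ⟨x, ⟨z, hz, rfl⟩, hx⟩ := hub (k:ℝ)
      exact ⟨z, hz, le_of_lt hx⟩
    choose zk hzkK hzkg using hex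
    exfalso
    set A : ℕ → Set (MorseBoundaryR Z o) := fun j => {v | ∃ k, j ≤ k ∧ zk k = v} with hA_def
    have hAclosed : ∀ j, IsClosed (A j) := fun j => closed_escaping hZ hzkg j
    have hAsubK : ∀ j, A j ⊆ K := by
      rintro j v ⟨k, _, rfl⟩
      exact hzkK k
    have hAdec : ∀ j, A (j+1) ⊆ A j := by
      rintro j v ⟨k, hk, rfl⟩
      exact ⟨k, by omega, rfl⟩
    have hAne : ∀ j, (A j).Nonempty := fun j => ⟨zk j, ⟨j, le_refl j, rfl⟩⟩
    have hA0 : IsCompact (A 0) := IsCompact.of_isClosed_subset hK (hAclosed 0) (hAsubK 0)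
    obtain ⟨w, hw⟩ := IsCompact.nonempty_iInter_of_sequence_nonempty_isCompact_isClosed
      A hAdec hAne hA0 hAclosed
    rw [Set.mem_iInter] at hw
    set j : ℕ := ⌈cgauge w L₀ e₀⌉₊ + 1 with hj_def
    obtain ⟨k, hk, hkw⟩ := hw j
    have h1 : (k:ℝ) ≤ cgauge w L₀ e₀ := by rw [← hkw]; exact hzkg k
    have h2 : cgauge w L₀ e₀ ≤ (⌈cgauge w L₀ e₀⌉₊ : ℝ) := Nat.le_ceil _
    have h3 : (j:ℝ) ≤ (k:ℝ) := by exact_mod_cast hk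
    rw [hj_def] at h3
    push_cast at h3
    linarith

end Lemma41
/-- a homeomorphism of Morse boundaries maps strata into strata: there is a
map `h` of Morse gauges with `p(∂^M_* X) ⊆ ∂^{h M}_* Y` and `p⁻¹(∂^M_* Y) ⊆ ∂^{h M}_* X`. -/
theorem stmt15 (X Y : Type) [MetricSpace X] [MetricSpace Y]
    [ProperSpace X] [ProperSpace Y] (hX : GeodesicSpace X) (hY : GeodesicSpace Y)
    (e : X) (f : Y) (p : MorseBoundaryR X e ≃ MorseBoundaryR Y f)
    (hp : @Continuous _ _ (morseTopologyR X e) (morseTopologyR Y f) p)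
    (hp' : @Continuous _ _ (morseTopologyR Y f) (morseTopologyR X e) p.symm) :
    ∃ h : MorseGauge → MorseGauge, ∀ M : MorseGauge,
      (∀ z ∈ stratumR X e M, p z ∈ stratumR Y f (h M)) ∧
      (∀ z ∈ stratumR Y f M, p.symm z ∈ stratumR X e (h M)) := by
  classical
  have main : ∀ M : MorseGauge, ∃ N : MorseGauge,
      (∀ z ∈ stratumR X e M, p z ∈ stratumR Y f N) ∧
      (∀ z ∈ stratumR Y f M, p.symm z ∈ stratumR X e N) := by
    intro M
    have hcX : @IsCompact _ (morseTopologyR X e) (stratumR X e (regg e M)) :=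
      stratum_regg_compact hX M
    have hKY : @IsCompact _ (morseTopologyR Y f) (p '' stratumR X e (regg e M)) :=
      @IsCompact.image _ _ (morseTopologyR X e) (morseTopologyR Y f) _ _ hcX hp
    obtain ⟨Na, hNa⟩ := compact_in_stratum hY hKY
    have hcY : @IsCompact _ (morseTopologyR Y f) (stratumR Y f (regg f M)) :=
      stratum_regg_compact hY M
    have hKX : @IsCompact _ (morseTopologyR X e) (p.symm '' stratumR Y f (regg f M)) :=
      @IsCompact.image _ _ (morseTopologyR Y f) (morseTopologyR X e) _ _ hcY hp'
    obtain ⟨Nb, hNb⟩ := compact_in_stratum hX hKX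
    refine ⟨fun L e' => max (Na L e') (Nb L e'), ?_, ?_⟩
    · intro z hz
      have h1 : p z ∈ stratumR Y f Na := hNa ⟨z, stratum_subset_regg M hz, rfl⟩
      exact stratum_mono (fun L e' _ _ => le_max_left _ _) h1
    · intro z hz
      have h1 : p.symm z ∈ stratumR X e Nb := hNb ⟨z, stratum_subset_regg M hz, rfl⟩
      exact stratum_mono (fun L e' _ _ => le_max_right _ _) h1
  choose h hh using main
  exact ⟨h, hh⟩
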